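/- The Robinson polynomial R satisfies R(a) ≥ 0 for all a ∈ ℝ³, but R is not a sum of squares of real polynomials. -/

import Mathlib

open MvPolynomial

noncomputable section

/-- The Robinson polynomial. -/
def Robinson : MvPolynomial (Fin 3) ℝ :=
  X 0 ^ 6 - X 0 ^ 4 * X 1 ^ 2 - X 0 ^ 2 * X 1 ^ 4 + X 1 ^ 6 - X 0 ^ 4 * X 2 ^ 2
    + 3 * X 0 ^ 2 * X 1 ^ 2 * X 2 ^ 2 - X 1 ^ 4 * X 2 ^ 2 - X 0 ^ 2 * X 2 ^ 4
    - X 1 ^ 2 * X 2 ^ 4 + X 2 ^ 6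

namespace RobinsonAux

lemma schur {a b c : ℝ} (ha : 0 ≤ a) (hb : 0 ≤ b) (hc : 0 ≤ c) :
    0 ≤ a^3+b^3+c^3 - a^2*b - a*b^2 - b^2*c - b*c^2 - a^2*c - a*c^2 + 3*a*b*c := by
  rcases le_total a b with h1 | h1 <;> rcases le_total b c with h2 | h2 <;>
    rcases le_total a c with h3 | h3 <;>
  nlinarith [mul_nonneg (mul_nonneg ha hb) hc, sq_nonneg (a-b), sq_nonneg (b-c), sq_nonneg (a-c),
    mul_nonneg ha (sq_nonneg (a-b)), mul_nonneg hc (sq_nonneg (a-b)), mul_nonneg hb (sq_nonneg (a-c)),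
    mul_nonneg ha (sq_nonneg (b-c)), mul_nonneg hc (sq_nonneg (a-c)), mul_nonneg hb (sq_nonneg (a-b))]

/-- substitute `x_j ↦ a_j * t` -/
def lf (a : Fin 3 → ℝ) : MvPolynomial (Fin 3) ℝ →+* Polynomial ℝ :=
  eval₂Hom Polynomial.C (fun j => Polynomial.C (a j) * Polynomial.X)

lemma lf_robinson (a : Fin 3 → ℝ) :
    lf a Robinson = Polynomial.C (eval a Robinson) * Polynomial.X ^ 6 := by
  simp only [Robinson, lf, map_add, map_sub, map_mul, map_pow, map_ofNat, eval_X, eval₂Hom_X']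
  ring

lemma hc_monomial (d : ℕ) (m : Fin 3 →₀ ℕ) (r : ℝ) :
    homogeneousComponent d (monomial m r) =
      if m.degree = d then monomial m r else 0 := by
  ext e
  rw [coeff_homogeneousComponent]
  by_cases h : m.degree = d
  · rw [if_pos h]
    rcases eq_or_ne m e with rfl | hne
    · simp [h]
    · simp [coeff_monomial, hne]
  · rw [if_neg h]
    rcases eq_or_ne m e with rfl | hne
    · simp [coeff_monomial, h]
    · simp [coeff_monomial, hne]

lemma lf_coeff (a : Fin 3 → ℝ) (p : MvPolynomial (Fin 3) ℝ) (d : ℕ) :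
    (lf a p).coeff d = eval a (homogeneousComponent d p) := by
  induction p using MvPolynomial.induction_on' with
  | monomial m r =>
    rw [lf, eval₂Hom_monomial, hc_monomial]
    have : (m.prod fun i e => (Polynomial.C (a i) * Polynomial.X) ^ e) =
        Polynomial.C (m.prod fun i e => (a i) ^ e) * Polynomial.X ^ m.degree := by
      rw [Finsupp.prod, Finsupp.prod, Finsupp.degree]
      rw [Finset.prod_congr rfl (fun i _ => mul_pow _ _ _), Finset.prod_mul_distrib,
        Finset.prod_pow_eq_pow_sum, map_prod]
      simp [map_pow]; left; rfl
    rw [this, ← mul_assoc, ← map_mul, Polynomial.coeff_C_mul, Polynomial.coeff_X_pow]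
    rcases eq_or_ne m.degree d with h | h
    · subst h; simp [eval_monomial]
    · rw [if_neg h, if_neg (fun hh => h hh.symm)]; simp
  | add p q hp hq =>
    rw [map_add, Polynomial.coeff_add, hp, hq, map_add, map_add]

def e3 (u v w : ℕ) : Fin 3 →₀ ℕ :=
  Finsupp.single 0 u + Finsupp.single 1 v + Finsupp.single 2 w

lemma e3_apply0 (u v w : ℕ) : e3 u v w 0 = u := by simp [e3, Finsupp.single_apply]
lemma e3_apply1 (u v w : ℕ) : e3 u v w 1 = v := by simp [e3, Finsupp.single_apply]
lemma e3_apply2 (u v w : ℕ) : e3 u v w 2 = w := by simp [e3, Finsupp.single_apply]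

lemma e3_inj {u v w u' v' w' : ℕ} : e3 u v w = e3 u' v' w' ↔ u = u' ∧ v = v' ∧ w = w' := by
  constructor
  · intro h
    exact ⟨by simpa [e3_apply0] using DFunLike.congr_fun h 0,
      by simpa [e3_apply1] using DFunLike.congr_fun h 1,
      by simpa [e3_apply2] using DFunLike.congr_fun h 2⟩
  · rintro ⟨rfl, rfl, rfl⟩; rfl

lemma fin3_finsupp (m : Fin 3 →₀ ℕ) : m = e3 (m 0) (m 1) (m 2) := by
  ext i
  fin_cases i <;> simp [e3_apply0, e3_apply1, e3_apply2]

lemma degree_eq3 (m : Fin 3 →₀ ℕ) : m.degree = m 0 + m 1 + m 2 := by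
  rw [Finsupp.degree, ← Fin.sum_univ_three (fun i => m i)]
  exact Finset.sum_subset (Finset.subset_univ _)
    (fun i _ h => Finsupp.notMem_support_iff.mp h)

def T3 : Finset (Fin 3 →₀ ℕ) :=
  {e3 3 0 0, e3 2 1 0, e3 2 0 1, e3 1 2 0, e3 1 1 1, e3 1 0 2, e3 0 3 0, e3 0 2 1,
    e3 0 1 2, e3 0 0 3}

lemma eval_e3 (x : Fin 3 → ℝ) (u v w : ℕ) (r : ℝ) :
    eval x (monomial (e3 u v w) r) = r * x 0 ^ u * x 1 ^ v * x 2 ^ w := by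
  rw [eval_monomial, e3]
  rw [Finsupp.prod_add_index (by simp) (by intros; rw [pow_add]),
    Finsupp.prod_add_index (by simp) (by intros; rw [pow_add]),
    Finsupp.prod_single_index (by simp), Finsupp.prod_single_index (by simp),
    Finsupp.prod_single_index (by simp)]
  ring

lemma cubic_eval {q : MvPolynomial (Fin 3) ℝ} (hq : q.IsHomogeneous 3) (x : Fin 3 → ℝ) :
    eval x q =
      coeff (e3 3 0 0) q * x 0 ^ 3 + coeff (e3 2 1 0) q * x 0 ^ 2 * x 1
      + coeff (e3 2 0 1) q * x 0 ^ 2 * x 2 + coeff (e3 1 2 0) q * x 0 * x 1 ^ 2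
      + coeff (e3 1 1 1) q * x 0 * x 1 * x 2 + coeff (e3 1 0 2) q * x 0 * x 2 ^ 2
      + coeff (e3 0 3 0) q * x 1 ^ 3 + coeff (e3 0 2 1) q * x 1 ^ 2 * x 2
      + coeff (e3 0 1 2) q * x 1 * x 2 ^ 2 + coeff (e3 0 0 3) q * x 2 ^ 3 := by
  have hsub : q.support ⊆ T3 := by
    intro m hm
    have hd : m.degree = 3 := by
      rw [Finsupp.degree_eq_weight_one]; exact hq (mem_support_iff.mp hm)
    rw [degree_eq3] at hd
    rw [fin3_finsupp m]
    have h0 : m 0 ≤ 3 := by omega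
    have h1 : m 1 ≤ 3 := by omega
    have h2 : m 2 ≤ 3 := by omega
    interval_cases hm0 : (m 0) <;> interval_cases hm1 : (m 1) <;>
      interval_cases hm2 : (m 2) <;> simp_all [T3]
  have hrep : q = ∑ m ∈ T3, monomial m (coeff m q) := by
    conv_lhs => rw [as_sum q]
    exact Finset.sum_subset hsub (fun m _ hm => by
      rw [notMem_support_iff.mp hm, monomial_zero])
  conv_lhs => rw [hrep]
  rw [map_sum, T3]
  repeat rw [Finset.sum_insert (by
    simp only [Finset.mem_insert, Finset.mem_singleton, e3_inj]
    norm_num)]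
  rw [Finset.sum_singleton]
  simp only [eval_e3]
  ring

end RobinsonAux

open RobinsonAux

/-- The Robinson polynomial is nonnegative on `ℝ³` but is not a sum of squares of real
polynomials. -/
theorem robinson_nonneg_and_not_sos :
    (∀ a : Fin 3 → ℝ, 0 ≤ MvPolynomial.eval a Robinson) ∧
      ¬ ∃ (k : ℕ) (g : Fin k → MvPolynomial (Fin 3) ℝ), Robinson = ∑ i, g i ^ 2 := by
  constructor
  · intro a
    have h := schur (sq_nonneg (a 0)) (sq_nonneg (a 1)) (sq_nonneg (a 2))
    simp only [Robinson, map_add, map_sub, map_mul, map_pow, map_ofNat, eval_X]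
    nlinarith [h]
  · rintro ⟨k, g, hg⟩
    set N : ℕ := Finset.univ.sup (fun i : Fin k => (g i).totalDegree) with hN
    -- the coefficient identities from `R(t • a) = ∑ g i (t • a) ^ 2`
    have key : ∀ (a : Fin 3 → ℝ) (n : ℕ),
        (if n = 6 then eval a Robinson else 0) =
        ∑ i : Fin k, ∑ ef ∈ Finset.HasAntidiagonal.antidiagonal n,
          eval a (homogeneousComponent ef.1 (g i)) *
            eval a (homogeneousComponent ef.2 (g i)) := by
      intro a n
      have h1 : lf a Robinson = ∑ i : Fin k, (lf a (g i)) ^ 2 := by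
        rw [hg, map_sum]; simp only [map_pow]
      calc (if n = 6 then eval a Robinson else 0)
          = (lf a Robinson).coeff n := by
            rw [lf_robinson, Polynomial.coeff_C_mul, Polynomial.coeff_X_pow]
            split_ifs with h <;> simp_all
        _ = ∑ i : Fin k, ((lf a (g i)) ^ 2).coeff n := by
            rw [h1, Polynomial.finset_sum_coeff]
        _ = _ := by
            refine Finset.sum_congr rfl (fun i _ => ?_)
            rw [sq, Polynomial.coeff_mul]
            exact Finset.sum_congr rfl (fun ef _ => by rw [lf_coeff, lf_coeff])
    -- all homogeneous components of degree ≥ 4 vanish identically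
    have high : ∀ (c d : ℕ), N < d + c → 4 ≤ d → ∀ (i : Fin k) (a : Fin 3 → ℝ),
        eval a (homogeneousComponent d (g i)) = 0 := by
      intro c
      induction c with
      | zero =>
        intro d hd _ i a
        have hle : (g i).totalDegree ≤ N :=
          Finset.le_sup (f := fun i => (g i).totalDegree) (Finset.mem_univ i)
        have htd : (g i).totalDegree < d := by omega
        rw [homogeneousComponent_eq_zero d (g i) htd, map_zero]
      | succ c ih =>
        intro d hd hd4 i a
        have hzero : ∀ e, d < e → ∀ j, eval a (homogeneousComponent e (g j)) = 0 :=
          fun e he j => ih e (by omega) (by omega) j a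
        have hk := key a (2 * d)
        rw [if_neg (by omega)] at hk
        have hterm : ∀ j : Fin k,
            (∑ ef ∈ Finset.HasAntidiagonal.antidiagonal (2 * d),
              eval a (homogeneousComponent ef.1 (g j)) *
                eval a (homogeneousComponent ef.2 (g j)))
            = eval a (homogeneousComponent d (g j)) ^ 2 := by
          intro j
          rw [sq]
          refine Finset.sum_eq_single_of_mem (d, d)
            (by rw [Finset.HasAntidiagonal.mem_antidiagonal]; omega) ?_
          rintro ⟨e, f⟩ hmem hne
          rw [Finset.HasAntidiagonal.mem_antidiagonal] at hmem
          have : d < e ∨ d < f := by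
            by_contra hcon
            push_neg at hcon
            exact hne (by rw [Prod.mk.injEq]; exact ⟨by omega, by omega⟩)
          rcases this with h | h
          · rw [hzero e h j, zero_mul]
          · rw [hzero f h j, mul_zero]
        rw [Finset.sum_congr rfl (fun j _ => hterm j)] at hk
        have h0 := (Finset.sum_eq_zero_iff_of_nonneg
          (fun j _ => sq_nonneg _)).mp hk.symm i (Finset.mem_univ i)
        exact pow_eq_zero_iff (two_ne_zero) |>.mp h0
    have v4 : ∀ d, 4 ≤ d → ∀ (i : Fin k) (a : Fin 3 → ℝ),
        eval a (homogeneousComponent d (g i)) = 0 :=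
      fun d hd i a => high (N + 1) d (by omega) hd i a
    -- degree 0 component vanishes
    have v0 : ∀ (i : Fin k) (a : Fin 3 → ℝ),
        eval a (homogeneousComponent 0 (g i)) = 0 := by
      intro i a
      have hk := key a 0
      rw [if_neg (by omega)] at hk
      simp only [Finset.Nat.antidiagonal_zero, Finset.sum_singleton] at hk
      have h0 := (Finset.sum_eq_zero_iff_of_nonneg
        (fun j _ => mul_self_nonneg _)).mp hk.symm i (Finset.mem_univ i)
      exact mul_self_eq_zero.mp h0
    -- degree 1 component vanishes
    have v1 : ∀ (i : Fin k) (a : Fin 3 → ℝ),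
        eval a (homogeneousComponent 1 (g i)) = 0 := by
      intro i a
      have hk := key a 2
      rw [if_neg (by omega)] at hk
      have hterm : ∀ j : Fin k,
          (∑ ef ∈ Finset.HasAntidiagonal.antidiagonal 2,
            eval a (homogeneousComponent ef.1 (g j)) *
              eval a (homogeneousComponent ef.2 (g j)))
          = eval a (homogeneousComponent 1 (g j)) ^ 2 := by
        intro j
        rw [sq]
        refine Finset.sum_eq_single_of_mem (1, 1)
          (by rw [Finset.HasAntidiagonal.mem_antidiagonal]; omega) ?_
        rintro ⟨e, f⟩ hmem hne
        rw [Finset.HasAntidiagonal.mem_antidiagonal] at hmem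
        have : e = 0 ∨ f = 0 := by
          by_contra hcon
          push_neg at hcon
          exact hne (by rw [Prod.mk.injEq]; exact ⟨by omega, by omega⟩)
        rcases this with rfl | rfl
        · rw [v0 j a, zero_mul]
        · rw [v0 j a, mul_zero]
      rw [Finset.sum_congr rfl (fun j _ => hterm j)] at hk
      have h0 := (Finset.sum_eq_zero_iff_of_nonneg
        (fun j _ => sq_nonneg _)).mp hk.symm i (Finset.mem_univ i)
      exact pow_eq_zero_iff (two_ne_zero) |>.mp h0
    -- degree 2 component vanishes
    have v2 : ∀ (i : Fin k) (a : Fin 3 → ℝ),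
        eval a (homogeneousComponent 2 (g i)) = 0 := by
      intro i a
      have hk := key a 4
      rw [if_neg (by omega)] at hk
      have hterm : ∀ j : Fin k,
          (∑ ef ∈ Finset.HasAntidiagonal.antidiagonal 4,
            eval a (homogeneousComponent ef.1 (g j)) *
              eval a (homogeneousComponent ef.2 (g j)))
          = eval a (homogeneousComponent 2 (g j)) ^ 2 := by
        intro j
        rw [sq]
        refine Finset.sum_eq_single_of_mem (2, 2)
          (by rw [Finset.HasAntidiagonal.mem_antidiagonal]; omega) ?_
        rintro ⟨e, f⟩ hmem hne
        rw [Finset.HasAntidiagonal.mem_antidiagonal] at hmem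
        have : e = 0 ∨ e = 1 ∨ f = 0 ∨ f = 1 := by
          by_contra hcon
          push_neg at hcon
          exact hne (by rw [Prod.mk.injEq]; exact ⟨by omega, by omega⟩)
        rcases this with rfl | rfl | rfl | rfl
        · rw [v0 j a, zero_mul]
        · rw [v1 j a, zero_mul]
        · rw [v0 j a, mul_zero]
        · rw [v1 j a, mul_zero]
      rw [Finset.sum_congr rfl (fun j _ => hterm j)] at hk
      have h0 := (Finset.sum_eq_zero_iff_of_nonneg
        (fun j _ => sq_nonneg _)).mp hk.symm i (Finset.mem_univ i)
      exact pow_eq_zero_iff (two_ne_zero) |>.mp h0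
    -- hence each `g i` evaluates like its cubic component
    have E : ∀ (i : Fin k) (a : Fin 3 → ℝ),
        eval a (g i) = eval a (homogeneousComponent 3 (g i)) := by
      intro i a
      set M : ℕ := max (g i).totalDegree 3 with hM
      have hsum : (∑ d ∈ Finset.range (M + 1), homogeneousComponent d (g i)) = g i := by
        refine (Finset.sum_subset (Finset.range_subset_range.mpr (by omega)) ?_).symm.trans
          (sum_homogeneousComponent (g i))
        intro d _ hd
        exact homogeneousComponent_eq_zero d (g i)
          (by simp only [Finset.mem_range, not_lt] at hd; omega)
      conv_lhs => rw [← hsum]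
      rw [map_sum]
      refine Finset.sum_eq_single_of_mem 3 (Finset.mem_range.mpr (by omega)) ?_
      intro d _ hd
      rcases (by omega : d = 0 ∨ d = 1 ∨ d = 2 ∨ 4 ≤ d) with rfl | rfl | rfl | h4
      · exact v0 i a
      · exact v1 i a
      · exact v2 i a
      · exact v4 d h4 i a
    -- evaluation of R as sum of squares of the cubic components
    have hRsum : ∀ a : Fin 3 → ℝ,
        eval a Robinson = ∑ i : Fin k, eval a (homogeneousComponent 3 (g i)) ^ 2 := by
      intro a
      rw [hg, map_sum]
      exact Finset.sum_congr rfl (fun i _ => by rw [map_pow, E i a])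
    -- the cubic components vanish at the zeros of R
    have hz : ∀ a : Fin 3 → ℝ, eval a Robinson = 0 → ∀ i : Fin k,
        eval a (homogeneousComponent 3 (g i)) = 0 := by
      intro a ha i
      have h0 := (Finset.sum_eq_zero_iff_of_nonneg
        (fun j _ => sq_nonneg _)).mp ((hRsum a).symm.trans ha) i (Finset.mem_univ i)
      exact pow_eq_zero_iff (two_ne_zero) |>.mp h0
    -- evaluate Robinson at the eight zeros
    have z1 : eval (fun j => ![(1:ℝ),1,1] j) Robinson = 0 := by
      simp only [Robinson, map_add, map_sub, map_mul, map_pow, map_ofNat, eval_X]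
      norm_num [Matrix.cons_val_two, Matrix.tail_cons]
    have z2 : eval (fun j => ![(1:ℝ),1,-1] j) Robinson = 0 := by
      simp only [Robinson, map_add, map_sub, map_mul, map_pow, map_ofNat, eval_X]
      norm_num [Matrix.cons_val_two, Matrix.tail_cons]
    have z3 : eval (fun j => ![(1:ℝ),-1,1] j) Robinson = 0 := by
      simp only [Robinson, map_add, map_sub, map_mul, map_pow, map_ofNat, eval_X]
      norm_num [Matrix.cons_val_two, Matrix.tail_cons]
    have z4 : eval (fun j => ![(1:ℝ),-1,-1] j) Robinson = 0 := by
      simp only [Robinson, map_add, map_sub, map_mul, map_pow, map_ofNat, eval_X]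
      norm_num [Matrix.cons_val_two, Matrix.tail_cons]
    have z5 : eval (fun j => ![(1:ℝ),1,0] j) Robinson = 0 := by
      simp only [Robinson, map_add, map_sub, map_mul, map_pow, map_ofNat, eval_X]
      norm_num [Matrix.cons_val_two, Matrix.tail_cons]
    have z6 : eval (fun j => ![(1:ℝ),-1,0] j) Robinson = 0 := by
      simp only [Robinson, map_add, map_sub, map_mul, map_pow, map_ofNat, eval_X]
      norm_num [Matrix.cons_val_two, Matrix.tail_cons]
    have z7 : eval (fun j => ![(1:ℝ),0,1] j) Robinson = 0 := by
      simp only [Robinson, map_add, map_sub, map_mul, map_pow, map_ofNat, eval_X]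
      norm_num [Matrix.cons_val_two, Matrix.tail_cons]
    have z8 : eval (fun j => ![(1:ℝ),0,-1] j) Robinson = 0 := by
      simp only [Robinson, map_add, map_sub, map_mul, map_pow, map_ofNat, eval_X]
      norm_num [Matrix.cons_val_two, Matrix.tail_cons]
    -- each cubic component has zero x³-coefficient, so vanishes at (1,0,0)
    have hfinal : ∀ i : Fin k, eval (fun j => ![(1:ℝ),0,0] j) (homogeneousComponent 3 (g i)) = 0 := by
      intro i
      set q := homogeneousComponent 3 (g i) with hq
      have hhom : q.IsHomogeneous 3 := homogeneousComponent_isHomogeneous 3 (g i)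
      have E1 := cubic_eval hhom (fun j => ![(1:ℝ),1,1] j)
      have E2 := cubic_eval hhom (fun j => ![(1:ℝ),1,-1] j)
      have E3 := cubic_eval hhom (fun j => ![(1:ℝ),-1,1] j)
      have E4 := cubic_eval hhom (fun j => ![(1:ℝ),-1,-1] j)
      have E5 := cubic_eval hhom (fun j => ![(1:ℝ),1,0] j)
      have E6 := cubic_eval hhom (fun j => ![(1:ℝ),-1,0] j)
      have E7 := cubic_eval hhom (fun j => ![(1:ℝ),0,1] j)
      have E8 := cubic_eval hhom (fun j => ![(1:ℝ),0,-1] j)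
      have E0 := cubic_eval hhom (fun j => ![(1:ℝ),0,0] j)
      rw [hz _ z1 i] at E1
      rw [hz _ z2 i] at E2
      rw [hz _ z3 i] at E3
      rw [hz _ z4 i] at E4
      rw [hz _ z5 i] at E5
      rw [hz _ z6 i] at E6
      rw [hz _ z7 i] at E7
      rw [hz _ z8 i] at E8
      norm_num [Matrix.cons_val_zero, Matrix.cons_val_one, Matrix.head_cons, Matrix.cons_val_two, Matrix.tail_cons] at E0 E1 E2 E3 E4 E5 E6 E7 E8
      rw [E0]
      linarith [E1, E2, E3, E4, E5, E6, E7, E8]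
    have : eval (fun j => ![(1:ℝ),0,0] j) Robinson = 0 := by
      rw [hRsum]
      exact Finset.sum_eq_zero (fun i _ => by rw [hfinal i]; ring)
    rw [show eval (fun j => ![(1:ℝ),0,0] j) Robinson = 1 by
      simp only [Robinson, map_add, map_sub, map_mul, map_pow, map_ofNat, eval_X]
      norm_num [Matrix.cons_val_two, Matrix.tail_cons]] at this
    exact one_ne_zero this
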